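/- Let H be a real symmetric d×d matrix and g ∈ ℝ^d a nonzero vector such that every eigenvalue of H is g-relevant. Then H is positive definite if and only if ⟨z, Hz⟩ > 0 for every nonzero z in the full Krylov space K(H,g) = span{H^i g : i ≥ 0}. -/

import Mathlib

open Matrix

/-- The Krylov subspace of degree `t`: span of `g, Hg, …, H^{t-1} g`. -/
noncomputable def Krylov {d : ℕ} (H : Matrix (Fin d) (Fin d) ℝ) (g : Fin d → ℝ) (t : ℕ) :
    Submodule ℝ (Fin d → ℝ) :=
  Submodule.span ℝ ((fun i : ℕ => (H ^ i) *ᵥ g) '' Set.Iio t)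

/-- The full Krylov space: span of `{H^i g : i ≥ 0}`. -/
noncomputable def KrylovFull {d : ℕ} (H : Matrix (Fin d) (Fin d) ℝ) (g : Fin d → ℝ) :
    Submodule ℝ (Fin d → ℝ) :=
  Submodule.span ℝ (Set.range fun i : ℕ => (H ^ i) *ᵥ g)

/-- `lam` is a `g`-relevant eigenvalue of `H`: `g` is not orthogonal to `ker (H - lam I)`. -/
def gRelevant {d : ℕ} (H : Matrix (Fin d) (Fin d) ℝ) (g : Fin d → ℝ) (lam : ℝ) : Prop :=
  ∃ v : Fin d → ℝ, H *ᵥ v = lam • v ∧ v ⬝ᵥ g ≠ 0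

/-- The Euclidean norm of a vector. -/
noncomputable def vnorm {d : ℕ} (x : Fin d → ℝ) : ℝ := Real.sqrt (x ⬝ᵥ x)

namespace KrylovAux

open Polynomial

variable {d : ℕ} (H : Matrix (Fin d) (Fin d) ℝ)

lemma aeval_mulVec_mem (g : Fin d → ℝ) (p : ℝ[X]) :
    (aeval H p) *ᵥ g ∈ KrylovFull H g := by
  induction p using Polynomial.induction_on' with
  | add p q hp hq => rw [map_add, Matrix.add_mulVec]; exact Submodule.add_mem _ hp hq
  | monomial n a =>
      rw [aeval_monomial, Algebra.algebraMap_eq_smul_one, smul_mul_assoc, one_mul,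
        Matrix.smul_mulVec]
      exact Submodule.smul_mem _ _ (Submodule.subset_span ⟨n, rfl⟩)

lemma pow_mulVec_eig {v : Fin d → ℝ} {c : ℝ} (hv : H *ᵥ v = c • v) (n : ℕ) :
    (H ^ n) *ᵥ v = c ^ n • v := by
  induction n with
  | zero => simp
  | succ n ih =>
      rw [pow_succ, ← Matrix.mulVec_mulVec, hv, Matrix.mulVec_smul, ih, smul_smul, ← pow_succ']

/-- dot of eigenvector with polynomial applied to any vector, using symmetry -/
lemma dot_pow_mulVec (hH : H.IsSymm) {w : Fin d → ℝ} {c : ℝ} (hw : H *ᵥ w = c • w)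
    (x : Fin d → ℝ) (n : ℕ) : w ⬝ᵥ ((H ^ n) *ᵥ x) = c ^ n * (w ⬝ᵥ x) := by
  induction n with
  | zero => simp
  | succ n ih =>
      have hsym : w ⬝ᵥ (H *ᵥ ((H ^ n) *ᵥ x)) = (H *ᵥ w) ⬝ᵥ ((H ^ n) *ᵥ x) := by
        rw [Matrix.dotProduct_mulVec, ← Matrix.mulVec_transpose, hH.eq]
      rw [pow_succ', ← Matrix.mulVec_mulVec, hsym, hw, smul_dotProduct, ih, smul_eq_mul, pow_succ]
      ring

lemma dot_aeval_mulVec (hH : H.IsSymm) {w : Fin d → ℝ} {c : ℝ} (hw : H *ᵥ w = c • w)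
    (x : Fin d → ℝ) (p : ℝ[X]) :
    w ⬝ᵥ ((aeval H p) *ᵥ x) = p.eval c * (w ⬝ᵥ x) := by
  induction p using Polynomial.induction_on' with
  | add p q hp hq =>
      rw [map_add, Matrix.add_mulVec, dotProduct_add, hp, hq, eval_add]; ring
  | monomial n a =>
      rw [aeval_monomial, Algebra.algebraMap_eq_smul_one, smul_mul_assoc, one_mul,
        Matrix.smul_mulVec, dotProduct_smul, dot_pow_mulVec H hH hw,
        eval_monomial]
      simp [mul_assoc, mul_comm, mul_left_comm]

lemma aeval_conj (V D W : Matrix (Fin d) (Fin d) ℝ) (hVW : V * W = 1) (hWV : W * V = 1)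
    (p : ℝ[X]) : aeval (V * D * W) p = V * (aeval D p) * W := by
  induction p using Polynomial.induction_on' with
  | add p q hp hq => rw [map_add, map_add, hp, hq]; noncomm_ring
  | monomial n a =>
      have hpow : (V * D * W) ^ n = V * D ^ n * W := by
        induction n with
        | zero => simp [hVW]
        | succ n ih =>
            rw [pow_succ, ih, pow_succ]
            calc V * D ^ n * W * (V * D * W) = V * D ^ n * (W * V) * D * W := by noncomm_ring
              _ = V * (D ^ n * D) * W := by rw [hWV]; noncomm_ring
      rw [aeval_monomial, aeval_monomial, hpow, Algebra.algebraMap_eq_smul_one,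
        smul_mul_assoc, one_mul, smul_mul_assoc, one_mul, mul_smul_comm, smul_mul_assoc]

lemma aeval_diagonal (f : Fin d → ℝ) (p : ℝ[X]) :
    aeval (Matrix.diagonal f) p = Matrix.diagonal fun i => p.eval (f i) := by
  induction p using Polynomial.induction_on' with
  | add p q hp hq =>
      rw [map_add, hp, hq]
      ext i j
      simp [Matrix.diagonal, Matrix.add_apply]
      split <;> simp
  | monomial n a =>
      rw [aeval_monomial, Matrix.algebraMap_eq_diagonal, Matrix.diagonal_pow,
        Matrix.diagonal_mul_diagonal]
      ext i j
      simp [Matrix.diagonal]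

end KrylovAux

/-- If every eigenvalue of `H` is `g`-relevant, then `H` is positive definite iff the
curvature is strictly positive on every nonzero element of the full Krylov space. -/
theorem posDef_iff_krylov_pos {d : ℕ} (H : Matrix (Fin d) (Fin d) ℝ)
    (hH : H.IsSymm) (g : Fin d → ℝ) (hg : g ≠ 0)
    (hrel : ∀ lam : ℝ, (∃ v : Fin d → ℝ, v ≠ 0 ∧ H *ᵥ v = lam • v) → gRelevant H g lam) :
    H.PosDef ↔ ∀ z ∈ KrylovFull H g, z ≠ 0 → 0 < z ⬝ᵥ (H *ᵥ z) := by
  classical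
  open Polynomial KrylovAux in
  have hHerm : H.IsHermitian := by
    rwa [Matrix.IsHermitian, Matrix.conjTranspose_eq_transpose_of_trivial]
  constructor
  · intro hpd z _ hz
    simpa using hpd.dotProduct_mulVec_pos hz
  · intro hpos
    -- key: every eigenvalue is positive
    have keypos : ∀ (lam : ℝ) (v : Fin d → ℝ), v ≠ 0 → H *ᵥ v = lam • v → 0 < lam := by
      intro lam v hv hveig
      obtain ⟨w, hw, hwg⟩ := hrel lam ⟨v, hv, hveig⟩
      set S : Finset ℝ := Finset.image hHerm.eigenvalues Finset.univ with hS
      set p : ℝ[X] := ∏ μ ∈ S.erase lam, (X - C μ) with hp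
      set z : Fin d → ℝ := (aeval H p) *ᵥ g with hzdef
      have hpeval : p.eval lam ≠ 0 := by
        rw [hp, eval_prod]
        refine Finset.prod_ne_zero_iff.2 fun μ hμ => ?_
        have : μ ≠ lam := Finset.ne_of_mem_erase hμ
        simp [sub_ne_zero, this.symm]
      have hdot : w ⬝ᵥ z = p.eval lam * (w ⬝ᵥ g) :=
        dot_aeval_mulVec H hH hw g p
      have hzne : z ≠ 0 := by
        intro h0
        rw [h0, dotProduct_zero] at hdot
        rcases mul_eq_zero.mp hdot.symm with h | h
        · exact hpeval h
        · exact hwg h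
      -- the full product annihilates H
      have hannih : aeval H (∏ μ ∈ S, (X - C μ)) = 0 := by
        rw [hHerm.spectral_theorem]
        set V : Matrix (Fin d) (Fin d) ℝ := (hHerm.eigenvectorUnitary : Matrix (Fin d) (Fin d) ℝ)
        have hVW : V * star V = 1 := (Matrix.mem_unitaryGroup_iff).mp hHerm.eigenvectorUnitary.2
        have hWV : star V * V = 1 := (Matrix.mem_unitaryGroup_iff').mp hHerm.eigenvectorUnitary.2
        rw [Unitary.conjStarAlgAut_apply, aeval_conj _ _ _ hVW hWV, aeval_diagonal]
        have : (Matrix.diagonal fun i =>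
            (∏ μ ∈ S, (X - C μ)).eval ((RCLike.ofReal ∘ hHerm.eigenvalues) i)) = 0 := by
          ext i j
          have hmem : hHerm.eigenvalues i ∈ S := Finset.mem_image_of_mem _ (Finset.mem_univ i)
          simp [Matrix.diagonal, eval_prod]
          intro hij
          exact Finset.prod_eq_zero hmem (by simp)
        rw [this]
        simp
      have hlamS : lam ∈ S := by
        by_contra hcon
        have : S.erase lam = S := Finset.erase_eq_of_notMem hcon
        rw [hp, this] at hzdef
        exact hzne (by rw [hzdef, hannih]; simp)
      have hfact : (X - C lam) * p = ∏ μ ∈ S, (X - C μ) := by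
        rw [hp]
        exact Finset.mul_prod_erase S (fun μ => (X : ℝ[X]) - C μ) hlamS
      have hzeig : H *ᵥ z = lam • z := by
        have h0 : (aeval H ((X - C lam) * p)) *ᵥ g = 0 := by
          rw [hfact, hannih]; simp
        rw [_root_.map_mul, ← Matrix.mulVec_mulVec, ← hzdef] at h0
        have : aeval H (X - C lam) = H - lam • 1 := by
          simp [aeval_X, aeval_C, Algebra.algebraMap_eq_smul_one]
        rw [this, Matrix.sub_mulVec, Matrix.smul_mulVec, Matrix.one_mulVec] at h0
        exact sub_eq_zero.mp h0
      have hzK : z ∈ KrylovFull H g := aeval_mulVec_mem H g p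
      have hquad : 0 < z ⬝ᵥ (H *ᵥ z) := hpos z hzK hzne
      rw [hzeig, dotProduct_smul] at hquad
      have hzz : 0 < z ⬝ᵥ z := by
        have h1 : (0:ℝ) ≤ z ⬝ᵥ z := Finset.sum_nonneg fun i _ => mul_self_nonneg (z i)
        rcases lt_or_eq_of_le h1 with h | h
        · exact h
        · exact absurd (dotProduct_self_eq_zero.mp h.symm) hzne
      rw [smul_eq_mul] at hquad
      nlinarith
    -- H is positive semidefinite
    have hpsd : H.PosSemidef := by
      refine hHerm.posSemidef_iff_eigenvalues_nonneg.mpr (Pi.le_def.mpr fun i => le_of_lt ?_)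
      exact keypos _ _ (by simpa using hHerm.eigenvectorBasis.orthonormal.ne_zero i)
        (hHerm.mulVec_eigenvectorBasis i)
    refine Matrix.PosDef.of_dotProduct_mulVec_pos hHerm fun x hx => ?_
    have hnn : 0 ≤ x ⬝ᵥ (H *ᵥ x) := by simpa using (posSemidef_iff_dotProduct_mulVec.mp hpsd).2 x
    rcases lt_or_eq_of_le hnn with h | h
    · simpa using h
    · exfalso
      have hx0 : H *ᵥ x = 0 := by
        have := (hpsd.dotProduct_mulVec_zero_iff x).mp (by simpa using h.symm)
        exact this
      have : H *ᵥ x = (0 : ℝ) • x := by simp [hx0]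
      exact lt_irrefl (0:ℝ) (keypos 0 x hx this)
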